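/- Let p ≥ 1 and ω a primitive p-th root of unity. Then 1 - ∏_{j=1}^{p} (1 - ω^j x + ω^{j(p-1)} y) = x^p + (-1)^p y^p - ∑_{j=1}^{⌊p/2⌋} k_j x^j y^j for some positive real coefficients k_j. -/

import Mathlib

open MvPolynomial Finset

/-- Lucas-polynomial coefficients: `cc n` are the coefficients of `L_n(t)` where
`L_0 = 2`, `L_1 = 1`, `L_{n+2} = L_{n+1} + t L_n`. -/
def cc : ℕ → ℕ → ℕ
  | 0, 0 => 2
  | 0, _+1 => 0
  | 1, 0 => 1
  | 1, _+1 => 0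
  | (n+2), 0 => cc (n+1) 0
  | (n+2), (j+1) => cc (n+1) (j+1) + cc n j

theorem cc_zero : ∀ n j, n < 2*j → cc n j = 0
  | 0, _+1, _ => rfl
  | 1, _+1, _ => rfl
  | n+2, j+1, h => by
      have h1 := cc_zero (n+1) (j+1) (by omega)
      have h2 := cc_zero n j (by omega)
      simp [cc, h1, h2]

theorem cc_zero_pos : ∀ n, 0 < cc n 0
  | 0 => by decide
  | 1 => by decide
  | n+2 => by simpa [cc] using cc_zero_pos (n+1)

theorem cc_zero_eq_one : ∀ n, 1 ≤ n → cc n 0 = 1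
  | 1, _ => rfl
  | n+2, _ => by simpa [cc] using cc_zero_eq_one (n+1) (by omega)

theorem cc_pos : ∀ n j, 1 ≤ j → 2*j ≤ n → 0 < cc n j
  | 0, _, hj, h => by omega
  | 1, _, hj, h => by omega
  | n+2, 1, _, h => by
      have := cc_zero_pos n
      simp only [cc]
      omega
  | n+2, j+2, _, h => by
      have := cc_pos n (j+1) (by omega) (by omega)
      simp only [cc]
      omega

theorem sum_rec (n : ℕ) (t : ℂ) :
    ∑ j ∈ range (n+3), (cc (n+2) j : ℂ) * t^j
      = ∑ j ∈ range (n+2), (cc (n+1) j : ℂ) * t^j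
        + t * ∑ j ∈ range (n+1), (cc n j : ℂ) * t^j := by
  rw [Finset.sum_range_succ' (fun j => (cc (n+2) j : ℂ) * t^j) (n+2)]
  have e1 : ∀ i, (cc (n+2) (i+1) : ℂ) = (cc (n+1) (i+1) : ℂ) + (cc n i : ℂ) := by
    intro i; norm_cast
  have e0 : (cc (n+2) 0 : ℂ) = (cc (n+1) 0 : ℂ) := by norm_cast
  calc (∑ i ∈ range (n+2), (cc (n+2) (i+1) : ℂ) * t^(i+1)) + (cc (n+2) 0 : ℂ) * t^0
      = ((∑ i ∈ range (n+2), (cc (n+1) (i+1) : ℂ) * t^(i+1)) + (cc (n+1) 0 : ℂ) * t^0)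
        + ∑ i ∈ range (n+2), (cc n i : ℂ) * t^(i+1) := by
        simp only [e1, e0, add_mul]
        rw [Finset.sum_add_distrib]; ring
    _ = ∑ j ∈ range (n+3), (cc (n+1) j : ℂ) * t^j
        + t * ∑ i ∈ range (n+2), (cc n i : ℂ) * t^i := by
        rw [← Finset.sum_range_succ' (fun j => (cc (n+1) j : ℂ) * t^j) (n+2),
          Finset.mul_sum]
        congr 1
        apply Finset.sum_congr rfl
        intro i _; ring
    _ = _ := by
        rw [Finset.sum_range_succ (fun j => (cc (n+1) j : ℂ) * t^j) (n+2),
          Finset.sum_range_succ (fun j => (cc n j : ℂ) * t^j) (n+1),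
          cc_zero (n+1) (n+2) (by omega), cc_zero n (n+1) (by omega)]
        push_cast
        ring

theorem AB_pow (A B t : ℂ) (hAB : A + B = 1) (hA : A^2 = A + t) (hB : B^2 = B + t) :
    ∀ n, A^n + B^n = ∑ j ∈ range (n+1), (cc n j : ℂ) * t^j
  | 0 => by norm_num [cc]
  | 1 => by
      rw [Finset.sum_range_succ, Finset.sum_range_succ]
      simp [cc, hAB]
  | (n+2) => by
      have h1 := AB_pow A B t hAB hA hB (n+1)
      have h2 := AB_pow A B t hAB hA hB n
      have key : A^(n+2) + B^(n+2) = (A^(n+1) + B^(n+1)) + t * (A^n + B^n) := by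
        linear_combination A^n * hA + B^n * hB
      rw [key, h1, h2, sum_rec]

theorem stmt_0 (p : ℕ) (hp : 1 ≤ p) (ω : ℂ) (hω : IsPrimitiveRoot ω p) :
    ∃ k : ℕ → ℝ, (∀ j ∈ Finset.Icc 1 (p / 2), 0 < k j) ∧
      (1 - ∏ j ∈ Finset.Icc 1 p,
          (1 - C (ω ^ j) * X 0 + C (ω ^ (j * (p - 1))) * X 1) :
            MvPolynomial (Fin 2) ℂ)
        = X 0 ^ p + C ((-1 : ℂ) ^ p) * X 1 ^ p
            - ∑ j ∈ Finset.Icc 1 (p / 2), C ((k j : ℂ)) * X 0 ^ j * X 1 ^ j := by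
  refine ⟨fun j => (cc p j : ℝ), ?_, ?_⟩
  · intro j hj
    simp only [Finset.mem_Icc] at hj
    have := cc_pos p j hj.1 (by omega)
    show (0:ℝ) < (cc p j : ℝ)
    exact_mod_cast this
  apply MvPolynomial.funext
  intro σ
  simp only [map_sub, map_add, map_one, map_mul, map_pow, map_prod, map_sum,
    eval_C, eval_X, eval_prod, eval_sum, eval_sub, eval_add, eval_mul,
    eval_pow, Complex.ofReal_natCast]
  set x := σ 0 with hx
  set y := σ 1 with hy
  set ω' : ℂ := ω ^ (p - 1) with hω'
  have hωp : ω ^ p = 1 := hω.pow_eq_one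
  have hpow : ∀ j : ℕ, ω ^ (j * (p - 1)) = ω' ^ j := fun j => by
    rw [hω', ← pow_mul, Nat.mul_comm]
  have hωω' : ω * ω' = 1 := by
    rw [hω', mul_comm, ← pow_succ, Nat.sub_add_cancel hp, hωp]
  have hIcc : ∀ g : ℕ → ℂ, g p = g 0 → ∏ j ∈ Icc 1 p, g j = ∏ j ∈ range p, g j := by
    intro g hg
    rw [Finset.range_eq_Ico, Finset.prod_eq_prod_Ico_succ_bot (by omega) g,
      ← Finset.Ico_add_one_right_eq_Icc, Finset.prod_Ico_succ_top (by omega), hg, mul_comm]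
  have h1 : ∀ z : ℂ, ∏ j ∈ range p, (z - ω ^ j) = z ^ p - 1 := by
    intro z
    have h := X_pow_sub_C_eq_prod hω (by omega : 0 < p) (one_pow p)
    apply_fun Polynomial.eval z at h
    simpa [Polynomial.eval_prod] using h.symm
  have hsq : ((-1:ℂ)^p) * ((-1:ℂ)^p) = 1 := by
    rw [← pow_add]; exact Even.neg_one_pow ⟨p, by ring⟩
  have hωprod : ∏ j ∈ range p, ω ^ j = (-1 : ℂ)^(p+1) := by
    have h0 : (-1:ℂ)^p * ∏ j ∈ range p, ω ^ j = -1 := by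
      have := h1 0
      rw [zero_pow (by omega : p ≠ 0), zero_sub] at this
      calc (-1:ℂ)^p * ∏ j ∈ range p, ω ^ j
          = ∏ j ∈ range p, ((-1) * ω ^ j) := by
            rw [Finset.prod_mul_distrib, Finset.prod_const, card_range]
        _ = ∏ j ∈ range p, ((0:ℂ) - ω ^ j) := by
            apply Finset.prod_congr rfl; intro j _; ring
        _ = -1 := this
    calc (∏ j ∈ range p, ω ^ j)
        = ((-1:ℂ)^p * (-1:ℂ)^p) * ∏ j ∈ range p, ω ^ j := by rw [hsq, one_mul]
      _ = (-1:ℂ)^p * ((-1:ℂ)^p * ∏ j ∈ range p, ω ^ j) := by ring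
      _ = (-1:ℂ)^p * (-1) := by rw [h0]
      _ = (-1:ℂ)^(p+1) := by rw [pow_succ]
  have hω'prod : ∏ j ∈ range p, ω' ^ j = (-1 : ℂ)^(p+1) := by
    have hmul : (∏ j ∈ range p, ω ^ j) * (∏ j ∈ range p, ω' ^ j) = 1 := by
      rw [← Finset.prod_mul_distrib]
      apply Finset.prod_eq_one
      intro j _
      rw [← mul_pow, hωω', one_pow]
    rw [hωprod] at hmul
    have hsq' : ((-1:ℂ)^(p+1)) * ((-1:ℂ)^(p+1)) = 1 := by
      rw [← pow_add]; exact Even.neg_one_pow ⟨p+1, by ring⟩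
    calc (∏ j ∈ range p, ω' ^ j)
        = ((-1:ℂ)^(p+1) * (-1:ℂ)^(p+1)) * ∏ j ∈ range p, ω' ^ j := by rw [hsq', one_mul]
      _ = (-1:ℂ)^(p+1) * ((-1:ℂ)^(p+1) * ∏ j ∈ range p, ω' ^ j) := by ring
      _ = (-1:ℂ)^(p+1) := by rw [hmul, mul_one]
  rw [hIcc _ (by simp [pow_mul, hωp])]
  simp only [hpow]
  have hsum_eq : ∀ t : ℂ, ∑ j ∈ range (p+1), (cc p j : ℂ) * t^j
      = 1 + ∑ j ∈ Icc 1 (p/2), (cc p j : ℂ) * t^j := by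
    intro t
    rw [Finset.sum_range_succ' (fun j => (cc p j : ℂ) * t^j) p, cc_zero_eq_one p hp]
    have h2 : ∑ i ∈ range p, (cc p (i+1) : ℂ) * t^(i+1)
        = ∑ j ∈ Icc 1 p, (cc p j : ℂ) * t^j := by
      rw [show Icc 1 p = Ico 1 (p+1) by rw [Finset.Ico_add_one_right_eq_Icc],
        Finset.sum_Ico_eq_sum_range]
      simp only [Nat.add_sub_cancel]
      apply Finset.sum_congr rfl
      intro i _
      rw [Nat.add_comm 1 i]
    rw [h2]
    have hsplit : ∑ j ∈ Ioc 0 (p/2), (cc p j : ℂ) * t^j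
        + ∑ j ∈ Ioc (p/2) p, (cc p j : ℂ) * t^j = ∑ j ∈ Ioc 0 p, (cc p j : ℂ) * t^j :=
      Finset.sum_Ioc_consecutive _ (by omega) (by omega)
    have hIoc : ∀ m : ℕ, (Ioc 0 m : Finset ℕ) = Icc 1 m := by
      intro m; ext a; simp; omega
    rw [← hIoc, ← hsplit]
    have hz : ∑ j ∈ Ioc (p/2) p, (cc p j : ℂ) * t^j = 0 := by
      apply Finset.sum_eq_zero
      intro j hj
      simp only [Finset.mem_Ioc] at hj
      rw [cc_zero p j (by omega)]
      simp
    rw [hz, add_zero]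
    rw [hIoc (p/2)]
    ring
  by_cases hx0 : x = 0
  · have hfac : ∀ j ∈ range p, 1 - ω^j * x + ω'^j * y = ω'^j * (ω^j + y) := by
      intro j _
      have hj1 : ω^j * ω'^j = 1 := by rw [← mul_pow, hωω', one_pow]
      rw [hx0]
      linear_combination -hj1
    rw [Finset.prod_congr rfl hfac, Finset.prod_mul_distrib, hω'prod]
    have hP : ∏ j ∈ range p, (ω^j + y) = (-1:ℂ)^p * ((-y)^p - 1) := by
      calc ∏ j ∈ range p, (ω^j + y)
          = ∏ j ∈ range p, ((-1) * ((-y) - ω^j)) := by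
            apply Finset.prod_congr rfl; intro j _; ring
        _ = (-1:ℂ)^p * ∏ j ∈ range p, ((-y) - ω^j) := by
            rw [Finset.prod_mul_distrib, Finset.prod_const, card_range]
        _ = (-1:ℂ)^p * ((-y)^p - 1) := by rw [h1]
    rw [hP, hx0]
    have hzero : ∑ j ∈ Icc 1 (p/2), (cc p j : ℂ) * (0:ℂ)^j * y^j = 0 := by
      apply Finset.sum_eq_zero
      intro j hj
      simp only [Finset.mem_Icc] at hj
      rw [zero_pow (by omega : j ≠ 0)]; ring
    rw [hzero, zero_pow (by omega : p ≠ 0)]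
    have hy1 : (-y:ℂ)^p = (-1)^p * y^p := by rw [neg_pow]
    have hstep : (-1:ℂ)^(p+1) = (-1:ℂ)^p * (-1) := pow_succ _ _
    linear_combination (-(-1:ℂ)^p*((-y)^p - 1)) * hstep + hy1 + ((-y:ℂ)^p - 1) * hsq
  · obtain ⟨d, hd⟩ := IsAlgClosed.exists_pow_nat_eq (k := ℂ) (1 + 4*x*y) (n := 2) (by norm_num)
    set A : ℂ := (1 + d)/2 with hA
    set B : ℂ := (1 - d)/2 with hB
    have hABsum : A + B = 1 := by rw [hA, hB]; ring
    have hA2 : A^2 = A + x*y := by rw [hA]; field_simp; linear_combination hd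
    have hB2 : B^2 = B + x*y := by rw [hB]; field_simp; linear_combination hd
    have hABprod : A * B = -(x*y) := by
      rw [hA, hB]; field_simp; linear_combination -hd
    have hfac : ∀ j ∈ range p,
        1 - ω^j * x + ω'^j * y = (-1) * ω'^j * x⁻¹ * ((x*ω^j - A) * (x*ω^j - B)) := by
      intro j _
      have hj1 : ω^j * ω'^j = 1 := by rw [← mul_pow, hωω', one_pow]
      apply mul_left_cancel₀ hx0
      have hxinv : x * x⁻¹ = 1 := mul_inv_cancel₀ hx0
      calc x * (1 - ω^j * x + ω'^j * y)
          = -(ω'^j) * ((x*ω^j - A) * (x*ω^j - B)) := by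
            linear_combination (x^2*ω^j - x*(A+B)) * hj1 + ω'^j * hABprod + (-x) * hABsum
        _ = x * ((-1) * ω'^j * x⁻¹ * ((x*ω^j - A) * (x*ω^j - B))) := by
            linear_combination (ω'^j * ((x*ω^j - A) * (x*ω^j - B))) * hxinv
    rw [Finset.prod_congr rfl hfac]
    have hprodA : ∀ Z : ℂ, ∏ j ∈ range p, (x*ω^j - Z) = (-1:ℂ)^p * (Z^p - x^p) := by
      intro Z
      calc ∏ j ∈ range p, (x*ω^j - Z)
          = ∏ j ∈ range p, ((-x) * (Z/x - ω^j)) := by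
            apply Finset.prod_congr rfl; intro j _; field_simp; ring
        _ = (-x)^p * ((Z/x)^p - 1) := by
            rw [Finset.prod_mul_distrib, Finset.prod_const, card_range, h1]
        _ = (-1:ℂ)^p * (Z^p - x^p) := by
            rw [neg_pow, div_pow, mul_assoc]
            congr 1
            field_simp
    have hbig : ∏ j ∈ range p, ((-1) * ω'^j * x⁻¹ * ((x*ω^j - A) * (x*ω^j - B)))
        = ((-1:ℂ)^p * (-1:ℂ)^(p+1) * (x⁻¹)^p)
            * (((-1:ℂ)^p * (A^p - x^p)) * ((-1:ℂ)^p * (B^p - x^p))) := by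
      rw [Finset.prod_mul_distrib, Finset.prod_mul_distrib, Finset.prod_mul_distrib,
        Finset.prod_mul_distrib, Finset.prod_const, Finset.prod_const, card_range,
        hω'prod, hprodA A, hprodA B]
    rw [hbig]
    have hS : A^p + B^p = 1 + ∑ j ∈ Icc 1 (p/2), (cc p j : ℂ) * x^j * y^j := by
      rw [AB_pow A B (x*y) hABsum hA2 hB2 p, hsum_eq]
      congr 1
      apply Finset.sum_congr rfl
      intro j _
      rw [mul_pow]; ring
    have hinv : (x⁻¹)^p * x^p = 1 := by
      rw [← mul_pow, inv_mul_cancel₀ hx0, one_pow]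
    have hABp : A^p * B^p = (-1:ℂ)^p * (x^p * y^p) := by
      rw [← mul_pow, hABprod, neg_pow, mul_pow]
    have hP2 : ((-1:ℂ)^p)^2 = 1 := by rw [← pow_mul]; exact Even.neg_one_pow ⟨p, by ring⟩
    have hstep : (-1:ℂ)^(p+1) = (-1:ℂ)^p * (-1) := pow_succ _ _
    linear_combination
      (-((-1:ℂ)^p)^3 * (x⁻¹)^p * (A^p - x^p) * (B^p - x^p)) * hstep
      + ((((-1:ℂ)^p)^2 + 1) * (x⁻¹)^p * (A^p - x^p) * (B^p - x^p)) * hP2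
      + ((-1:ℂ)^p * y^p + x^p - (A^p + B^p)) * hinv
      + (x⁻¹)^p * hABp
      + (-1) * hS
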